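/- Let $\Gamma = \langle y_1, y_2 \rangle \cong \mathbb{Z}^2$, and for parameters $(k_0, q_1, q_2)$ and $(k_0', q_1', q_2')$ with $k_0, k_0' \in \mathbb{Z}^+$ and $q_1, q_1'$ not roots of unity, $0 < |q_1|, |q_1'| < 1$ (over $k = \mathbb{C}$), consider data with $g_1 = g_2 = y_1^{k_0}$, $\chi_1(y_1) = q_1$, $\chi_1(y_2) = q_2$, $\chi_2 = \chi_1^{-1}$ (and primed analogues). If there is an automorphism $\varphi$ of $\Gamma$ and a permutation $\sigma \in S_2$ with $\varphi(g_i) = g'_{\sigma(i)}$ and $\chi_i = \chi'_{\sigma(i)} \circ \varphi$, then $k_0 = k_0'$, $q_1 = q_1'$, and there exists an integer $b$ such that $q_2' = q_1^b q_2$ or $q_2' = q_1^b q_2^{-1}$. -/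

import Mathlib

private lemma rep16 (m n : ℤ) : Multiplicative.ofAdd ((m, n) : ℤ × ℤ) =
    (Multiplicative.ofAdd ((1, 0) : ℤ × ℤ)) ^ m *
      (Multiplicative.ofAdd ((0, 1) : ℤ × ℤ)) ^ n := by
  rw [← ofAdd_zsmul, ← ofAdd_zsmul, ← ofAdd_add]
  congr 1 <;> simp [Prod.ext_iff]


/-- Isomorphism classification in Case 2(I) of Proposition 5.6: for data over
`Γ = ⟨y₁, y₂⟩ ≅ ℤ²` with `g₁ = g₂ = y₁^{k₀}`, `χ₁(y₁) = q₁`, `χ₁(y₂) = q₂`,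
`χ₂ = χ₁⁻¹` (and primed analogues), with `q₁, q₁'` not roots of unity and
`0 < |q₁|, |q₁'| < 1`, any isomorphism of data `(φ, σ)` forces `k₀ = k₀'`, `q₁ = q₁'`
and `q₂' = q₁^b q₂` or `q₂' = q₁^b q₂⁻¹` for some integer `b`. -/
theorem stmt_16 (k₀ k₀' : ℤ) (hk₀ : 0 < k₀) (hk₀' : 0 < k₀')
    (q₁ q₂ q₁' q₂' : ℂˣ)
    (hru : ∀ n : ℕ, 0 < n → q₁ ^ n ≠ 1) (hru' : ∀ n : ℕ, 0 < n → q₁' ^ n ≠ 1)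
    (habs : 0 < ‖(q₁ : ℂ)‖ ∧ ‖(q₁ : ℂ)‖ < 1)
    (habs' : 0 < ‖(q₁' : ℂ)‖ ∧ ‖(q₁' : ℂ)‖ < 1)
    (y₁ y₂ : Multiplicative (ℤ × ℤ))
    (hy₁ : y₁ = Multiplicative.ofAdd ((1, 0) : ℤ × ℤ))
    (hy₂ : y₂ = Multiplicative.ofAdd ((0, 1) : ℤ × ℤ))
    (g g' : Fin 2 → Multiplicative (ℤ × ℤ))
    (hg : ∀ i, g i = y₁ ^ k₀) (hg' : ∀ i, g' i = y₁ ^ k₀')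
    (χ χ' : Fin 2 → (Multiplicative (ℤ × ℤ) →* ℂˣ))
    (hχ₁ : χ 0 y₁ = q₁) (hχ₂ : χ 0 y₂ = q₂) (hχinv : χ 1 = (χ 0)⁻¹)
    (hχ₁' : χ' 0 y₁ = q₁') (hχ₂' : χ' 0 y₂ = q₂') (hχinv' : χ' 1 = (χ' 0)⁻¹)
    (φ : Multiplicative (ℤ × ℤ) ≃* Multiplicative (ℤ × ℤ))
    (σ : Equiv.Perm (Fin 2))
    (hφg : ∀ i, φ (g i) = g' (σ i))
    (hφχ : ∀ i, χ i = (χ' (σ i)).comp φ.toMonoidHom) :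
    k₀ = k₀' ∧ q₁ = q₁' ∧ ∃ b : ℤ, q₂' = q₁ ^ b * q₂ ∨ q₂' = q₁ ^ b * q₂⁻¹ := by
  obtain ⟨a, c, hA⟩ : ∃ a c, φ y₁ = Multiplicative.ofAdd ((a, c) : ℤ × ℤ) :=
    ⟨(Multiplicative.toAdd (φ y₁)).1, (Multiplicative.toAdd (φ y₁)).2, rfl⟩
  obtain ⟨b, d, hB⟩ : ∃ b d, φ y₂ = Multiplicative.ofAdd ((b, d) : ℤ × ℤ) :=
    ⟨(Multiplicative.toAdd (φ y₂)).1, (Multiplicative.toAdd (φ y₂)).2, rfl⟩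
  have key : ∀ m n : ℤ, φ (Multiplicative.ofAdd ((m, n) : ℤ × ℤ)) =
      Multiplicative.ofAdd ((m * a + n * b, m * c + n * d) : ℤ × ℤ) := by
    intro m n
    rw [rep16, ← hy₁, ← hy₂, map_mul, map_zpow, map_zpow, hA, hB,
      ← ofAdd_zsmul, ← ofAdd_zsmul, ← ofAdd_add]
    congr 1
  have h1 := hφg 0
  rw [hg, hg', map_zpow, hA, hy₁, ← ofAdd_zsmul, ← ofAdd_zsmul] at h1
  have h1' : ((k₀ * a, k₀ * c) : ℤ × ℤ) = (k₀' * 1, k₀' * 0) := by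
    simpa [smul_eq_mul, Prod.ext_iff] using Multiplicative.ofAdd.injective h1
  have hc : c = 0 := by
    have h2 : k₀ * c = 0 := by
      have := congrArg Prod.snd h1'; simpa using this
    rcases mul_eq_zero.mp h2 with h | h
    · omega
    · exact h
  have hka : k₀ * a = k₀' := by
    have := congrArg Prod.fst h1'; simpa using this
  obtain ⟨p, hp⟩ := φ.surjective y₂
  obtain ⟨m, n, hm⟩ : ∃ m n, p = Multiplicative.ofAdd ((m, n) : ℤ × ℤ) :=
    ⟨(Multiplicative.toAdd p).1, (Multiplicative.toAdd p).2, rfl⟩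
  rw [hm, key, hy₂] at hp
  have hp' : ((m * a + n * b, m * c + n * d) : ℤ × ℤ) = (0, 1) :=
    Multiplicative.ofAdd.injective hp
  have hd1 : d * n = 1 := by
    have := congrArg Prod.snd hp'; rw [hc] at this; simp at this
    rw [mul_comm]; exact this
  have hd : d = 1 ∨ d = -1 := Int.isUnit_iff.mp (IsUnit.of_mul_eq_one (a := d) n hd1)
  obtain ⟨r, hr⟩ := φ.surjective y₁
  obtain ⟨s, t, hs⟩ : ∃ s t, r = Multiplicative.ofAdd ((s, t) : ℤ × ℤ) :=
    ⟨(Multiplicative.toAdd r).1, (Multiplicative.toAdd r).2, rfl⟩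
  rw [hs, key, hy₁] at hr
  have hr' : ((s * a + t * b, s * c + t * d) : ℤ × ℤ) = (1, 0) :=
    Multiplicative.ofAdd.injective hr
  have ht : t = 0 := by
    have := congrArg Prod.snd hr'; rw [hc] at this; simp at this
    rcases this with h' | h'
    · exact h'
    · rcases hd with h | h <;> omega
  have ha1 : a * s = 1 := by
    have := congrArg Prod.fst hr'; rw [ht] at this; simp at this
    rw [mul_comm]; exact this
  have ha : a = 1 := by
    rcases Int.isUnit_iff.mp (IsUnit.of_mul_eq_one (a := a) s ha1) with h | h
    · exact h
    · rw [h] at hka; omega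
  have hk : k₀ = k₀' := by rw [ha] at hka; omega
  have hχeval : ∀ (ψ : Multiplicative (ℤ × ℤ) →* ℂˣ) (m n : ℤ),
      ψ (Multiplicative.ofAdd ((m, n) : ℤ × ℤ)) = (ψ y₁) ^ m * (ψ y₂) ^ n := by
    intro ψ m n
    rw [rep16, ← hy₁, ← hy₂, map_mul, map_zpow, map_zpow]
  have hσ : σ 0 = 0 ∨ σ 0 = 1 := by omega
  have habsne : q₁ = q₁'⁻¹ → False := by
    intro h
    have : ‖(q₁ : ℂ)‖ * ‖(q₁' : ℂ)‖ = 1 := by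
      rw [h, ← norm_mul]; simp
    nlinarith [habs.1, habs.2, habs'.1, habs'.2]
  have e1 := congrArg (fun ψ => ψ y₁) (hφχ 0)
  have e2 := congrArg (fun ψ => ψ y₂) (hφχ 0)
  simp only [MonoidHom.comp_apply, MulEquiv.coe_toMonoidHom] at e1 e2
  rw [hχ₁, hA, hc, ha] at e1
  rw [hχ₂, hB] at e2
  rcases hσ with h0 | h0
  · rw [h0, hχeval, hχ₁', hχ₂'] at e1 e2
    simp at e1
    refine ⟨hk, e1, ?_⟩
    rw [← e1] at e2
    rcases hd with h | h
    · refine ⟨-b, Or.inl ?_⟩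
      rw [h] at e2; simp at e2
      rw [e2]; group
    · refine ⟨b, Or.inr ?_⟩
      rw [h] at e2
      rw [e2]; group
      rw [mul_comm (q₁ ^ b) q₂', mul_assoc, ← zpow_add]
      simp
  · exfalso
    rw [h0, hχinv'] at e1
    simp only [MonoidHom.inv_apply] at e1
    rw [hχeval, hχ₁', hχ₂'] at e1
    simp at e1
    exact habsne e1
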